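/- Let C ≠ 0 and a ≠ 0 be real constants and set f(u) = C·exp(4au). Let u(t,x) be a smooth real-valued solution of the gKN equation with f, such that u_x(t,x) ≠ 0 for all (t,x). Then the function P(t,x) = 1 + 3at·u_t(t,x) + ax·u_x(t,x) satisfies the symmetry determining equation ∂_t P − ∂_x³ P + 3(u_xx/u_x)∂_x² P − (3/2)(u_xx²/u_x²)∂_x P + (f(u)/u_x²)∂_x P − (f'(u)/u_x)P = 0 at every point (t,x). (This is the point symmetry X_{3a} = −3at∂_t − ax∂_x + ∂_u of the gKN equation.) -/

import Mathlib

open Real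

/-- Partial derivative with respect to the second (spatial) variable. -/
noncomputable def pdx (u : ℝ → ℝ → ℝ) : ℝ → ℝ → ℝ := fun t x => deriv (fun y => u t y) x

/-- Partial derivative with respect to the first (time) variable. -/
noncomputable def pdt (u : ℝ → ℝ → ℝ) : ℝ → ℝ → ℝ := fun t x => deriv (fun s => u s x) t

/-- `u` solves the generalized Krichever-Novikov equation with nonlinearity `f`:
`u_t = u_xxx - (3/2) u_xx^2/u_x + f(u)/u_x`. -/
def isGKN (f : ℝ → ℝ) (u : ℝ → ℝ → ℝ) : Prop :=
  ∀ t x, pdt u t x =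
    pdx (pdx (pdx u)) t x - (3/2) * (pdx (pdx u) t x)^2 / pdx u t x + f (u t x) / pdx u t x

/-- The symmetry determining equation for a characteristic function `P` along `u`:
`∂_t P - ∂_x^3 P + 3 (u_xx/u_x) ∂_x^2 P - (3/2)(u_xx^2/u_x^2) ∂_x P + (f(u)/u_x^2) ∂_x P
 - (f'(u)/u_x) P = 0`. -/
def symmDet (f : ℝ → ℝ) (u P : ℝ → ℝ → ℝ) : Prop :=
  ∀ t x,
    pdt P t x - pdx (pdx (pdx P)) t x
      + 3 * (pdx (pdx u) t x / pdx u t x) * pdx (pdx P) t x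
      - (3/2) * ((pdx (pdx u) t x)^2 / (pdx u t x)^2) * pdx P t x
      + (f (u t x) / (pdx u t x)^2) * pdx P t x
      - (deriv f (u t x) / pdx u t x) * P t x = 0

private lemma KN.hasDerivAt_pdx {G : ℝ → ℝ → ℝ}
    (hG : ContDiff ℝ (⊤ : ℕ∞) (Function.uncurry G)) (t x : ℝ) :
    HasDerivAt (fun y => G t y) (pdx G t x) x := by
  have hd : DifferentiableAt ℝ (fun y => G t y) x :=
    ((hG.differentiable (by simp)) (t, x)).comp x
      ((differentiableAt_const t).prodMk differentiableAt_id)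
  exact hd.hasDerivAt

private lemma KN.hasDerivAt_pdt {G : ℝ → ℝ → ℝ}
    (hG : ContDiff ℝ (⊤ : ℕ∞) (Function.uncurry G)) (t x : ℝ) :
    HasDerivAt (fun s => G s x) (pdt G t x) t := by
  have hd : DifferentiableAt ℝ (fun s => G s x) t :=
    by have hk := ((hG.differentiable (by simp)) (t, x)).comp t
        (DifferentiableAt.prodMk (differentiableAt_id (x := t) (𝕜 := ℝ)) (differentiableAt_const x)); exact hk
  exact hd.hasDerivAt

private lemma KN.pdx_eq {G : ℝ → ℝ → ℝ}
    (hG : ContDiff ℝ (⊤ : ℕ∞) (Function.uncurry G)) (t x : ℝ) :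
    pdx G t x = fderiv ℝ (Function.uncurry G) (t, x) (0, 1) := by
  have h1 : HasFDerivAt (Function.uncurry G) (fderiv ℝ (Function.uncurry G) (t, x)) (t, x) :=
    ((hG.differentiable (by simp)) (t, x)).hasFDerivAt
  have h2 : HasDerivAt (fun y => ((t, y) : ℝ × ℝ)) ((0 : ℝ), (1 : ℝ)) x :=
    (hasDerivAt_const x t).prodMk (hasDerivAt_id x)
  exact (h1.comp_hasDerivAt x h2).deriv

private lemma KN.pdt_eq {G : ℝ → ℝ → ℝ}
    (hG : ContDiff ℝ (⊤ : ℕ∞) (Function.uncurry G)) (t x : ℝ) :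
    pdt G t x = fderiv ℝ (Function.uncurry G) (t, x) (1, 0) := by
  have h1 : HasFDerivAt (Function.uncurry G) (fderiv ℝ (Function.uncurry G) (t, x)) (t, x) :=
    ((hG.differentiable (by simp)) (t, x)).hasFDerivAt
  have h2 : HasDerivAt (fun s => ((s, x) : ℝ × ℝ)) ((1 : ℝ), (0 : ℝ)) t :=
    (hasDerivAt_id t).prodMk (hasDerivAt_const t x)
  exact (h1.comp_hasDerivAt t h2).deriv

private lemma KN.contDiff_pdx {G : ℝ → ℝ → ℝ}
    (hG : ContDiff ℝ (⊤ : ℕ∞) (Function.uncurry G)) :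
    ContDiff ℝ (⊤ : ℕ∞) (Function.uncurry (pdx G)) := by
  have h : Function.uncurry (pdx G)
      = fun p : ℝ × ℝ => fderiv ℝ (Function.uncurry G) p ((0 : ℝ), (1 : ℝ)) := by
    funext p
    exact KN.pdx_eq hG p.1 p.2
  rw [h]
  exact (hG.fderiv_right (by exact_mod_cast le_top)).clm_apply contDiff_const

private lemma KN.contDiff_pdt {G : ℝ → ℝ → ℝ}
    (hG : ContDiff ℝ (⊤ : ℕ∞) (Function.uncurry G)) :
    ContDiff ℝ (⊤ : ℕ∞) (Function.uncurry (pdt G)) := by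
  have h : Function.uncurry (pdt G)
      = fun p : ℝ × ℝ => fderiv ℝ (Function.uncurry G) p ((1 : ℝ), (0 : ℝ)) := by
    funext p
    exact KN.pdt_eq hG p.1 p.2
  rw [h]
  exact (hG.fderiv_right (by exact_mod_cast le_top)).clm_apply contDiff_const

private lemma KN.comm {G : ℝ → ℝ → ℝ}
    (hG : ContDiff ℝ (⊤ : ℕ∞) (Function.uncurry G)) (t x : ℝ) :
    pdt (pdx G) t x = pdx (pdt G) t x := by
  set F := Function.uncurry G with hF
  have hdF : ∀ p, HasFDerivAt F (fderiv ℝ F p) p := fun p =>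
    ((hG.differentiable (by simp)) p).hasFDerivAt
  have hF1 : ContDiff ℝ (⊤ : ℕ∞) (fderiv ℝ F) := hG.fderiv_right (by exact_mod_cast le_top)
  have hsnd : HasFDerivAt (fderiv ℝ F) (fderiv ℝ (fderiv ℝ F) (t, x)) (t, x) :=
    ((hF1.differentiable (by simp)) (t, x)).hasFDerivAt
  have hsymm := second_derivative_symmetric hdF hsnd
  -- evaluated derivative helper
  have key : ∀ v w : ℝ × ℝ,
      HasFDerivAt (fun p => fderiv ℝ F p v)
        ((ContinuousLinearMap.apply ℝ ℝ v).comp (fderiv ℝ (fderiv ℝ F) (t, x))) (t, x) :=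
    fun v w => (ContinuousLinearMap.apply ℝ ℝ v).hasFDerivAt.comp (t, x) hsnd
  have h2 : HasDerivAt (fun s => ((s, x) : ℝ × ℝ)) ((1 : ℝ), (0 : ℝ)) t :=
    (hasDerivAt_id t).prodMk (hasDerivAt_const t x)
  have h3 : HasDerivAt (fun y => ((t, y) : ℝ × ℝ)) ((0 : ℝ), (1 : ℝ)) x :=
    (hasDerivAt_const x t).prodMk (hasDerivAt_id x)
  have hL : pdt (pdx G) t x = fderiv ℝ (fderiv ℝ F) (t, x) (1, 0) (0, 1) := by
    have hfun : (fun s => pdx G s x) = fun s => fderiv ℝ F (s, x) ((0 : ℝ), (1 : ℝ)) := by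
      funext s; exact KN.pdx_eq hG s x
    have hda : HasDerivAt (fun s => fderiv ℝ F (s, x) ((0 : ℝ), (1 : ℝ)))
        (fderiv ℝ (fderiv ℝ F) (t, x) (1, 0) (0, 1)) t :=
      by have hk := (key ((0 : ℝ), (1 : ℝ)) 0).comp_hasDerivAt t h2; exact hk
    show deriv (fun s => pdx G s x) t = _
    rw [hfun, hda.deriv]
  have hR : pdx (pdt G) t x = fderiv ℝ (fderiv ℝ F) (t, x) (0, 1) (1, 0) := by
    have hfun : (fun y => pdt G t y) = fun y => fderiv ℝ F (t, y) ((1 : ℝ), (0 : ℝ)) := by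
      funext y; exact KN.pdt_eq hG t y
    have hda : HasDerivAt (fun y => fderiv ℝ F (t, y) ((1 : ℝ), (0 : ℝ)))
        (fderiv ℝ (fderiv ℝ F) (t, x) (0, 1) (1, 0)) x :=
      (key ((1 : ℝ), (0 : ℝ)) 0).comp_hasDerivAt x h3
    show deriv (fun y => pdt G t y) x = _
    rw [hfun, hda.deriv]
  rw [hL, hR, hsymm]

private noncomputable def KN.R (C a : ℝ) (u : ℝ → ℝ → ℝ) : ℝ → ℝ → ℝ := fun t x =>
  pdx (pdx (pdx u)) t x - 3/2 * (pdx (pdx u) t x)^2 / pdx u t x + (C * Real.exp (4 * a * u t x)) / pdx u t x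

private noncomputable def KN.R1 (C a : ℝ) (u : ℝ → ℝ → ℝ) : ℝ → ℝ → ℝ := fun t x =>
  pdx (pdx (pdx (pdx u))) t x - 3 * pdx (pdx u) t x * pdx (pdx (pdx u)) t x / pdx u t x + 3/2 * pdx (pdx u) t x^3 / pdx u t x^2 + 4 * a * (C * Real.exp (4 * a * u t x)) - (C * Real.exp (4 * a * u t x)) * pdx (pdx u) t x / pdx u t x^2

private noncomputable def KN.R2 (C a : ℝ) (u : ℝ → ℝ → ℝ) : ℝ → ℝ → ℝ := fun t x =>
  pdx (pdx (pdx (pdx (pdx u)))) t x - 3 * pdx (pdx (pdx u)) t x^2 / pdx u t x - 3 * pdx (pdx u) t x * pdx (pdx (pdx (pdx u))) t x / pdx u t x + 15/2 * pdx (pdx u) t x^2 * pdx (pdx (pdx u)) t x / pdx u t x^2 - 3 * pdx (pdx u) t x^4 / pdx u t x^3 + 16 * a^2 * (C * Real.exp (4 * a * u t x)) * pdx u t x - 4 * a * (C * Real.exp (4 * a * u t x)) * pdx (pdx u) t x / pdx u t x - (C * Real.exp (4 * a * u t x)) * pdx (pdx (pdx u)) t x / pdx u t x^2 + 2 * (C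 * Real.exp (4 * a * u t x)) * pdx (pdx u) t x^2 / pdx u t x^3

private noncomputable def KN.R3 (C a : ℝ) (u : ℝ → ℝ → ℝ) : ℝ → ℝ → ℝ := fun t x =>
  pdx (pdx (pdx (pdx (pdx (pdx u))))) t x - 9 * pdx (pdx (pdx u)) t x * pdx (pdx (pdx (pdx u))) t x / pdx u t x - 3 * pdx (pdx u) t x * pdx (pdx (pdx (pdx (pdx u)))) t x / pdx u t x + 18 * pdx (pdx u) t x * pdx (pdx (pdx u)) t x^2 / pdx u t x^2 + 21/2 * pdx (pdx u) t x^2 * pdx (pdx (pdx (pdx u))) t x / pdx u t x^2 - 27 * pdx (pdx u) t x^3 * pdx (pdx (pdx u)) t x / pdx u t x^3 + 9 * pdx (pdx u) t x^5 / pdx u t x^4 + 64 * a^3 * (C * Real.exp (4 * a * u t x)) * pdx u t x^2 - 8 * a * (C * Real.exp (4 * a * u t x)) * pdx (pdx (pdx u)) t x / pdx u t x + 12 * a * (C * Real.exp (4 * a * u t x)) * pdx (pdx u) t x^2 / pdx u t x^2 - (C * Real.exp (4 * a * u t x)) * pdx (pdx (pdx (pdx u))) t x / pdx u t x^2 + 6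 * (C * Real.exp (4 * a * u t x)) * pdx (pdx u) t x * pdx (pdx (pdx u)) t x / pdx u t x^3 - 6 * (C * Real.exp (4 * a * u t x)) * pdx (pdx u) t x^3 / pdx u t x^4

section KNderiv

variable {C a : ℝ} {u : ℝ → ℝ → ℝ}

private lemma KN.hasDerivAt_R (hu : ContDiff ℝ (⊤ : ℕ∞) (Function.uncurry u))
    (hux : ∀ t x, pdx u t x ≠ 0) (t x : ℝ) :
    HasDerivAt (fun y => KN.R C a u t y) (KN.R1 C a u t x) x := by
  have s1 := KN.contDiff_pdx hu
  have s2 := KN.contDiff_pdx s1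
  have s3 := KN.contDiff_pdx s2
  have D0 := KN.hasDerivAt_pdx hu t x
  have D1 := KN.hasDerivAt_pdx s1 t x
  have D2 := KN.hasDerivAt_pdx s2 t x
  have D3 := KN.hasDerivAt_pdx s3 t x
  have hx1 := hux t x
  have hE : HasDerivAt (fun y => C * Real.exp (4 * a * u t y))
      (C * (Real.exp (4 * a * u t x) * (4 * a * pdx u t x))) x :=
    (D0.const_mul (4 * a)).exp.const_mul C
  have h := (D3.sub (((D2.fun_pow 2).const_mul (3/2)).div D1 hx1)).add (hE.div D1 hx1)
  exact h.congr_deriv (by simp only [KN.R1]; field_simp; ring)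

private lemma KN.hasDerivAt_R1 (hu : ContDiff ℝ (⊤ : ℕ∞) (Function.uncurry u))
    (hux : ∀ t x, pdx u t x ≠ 0) (t x : ℝ) :
    HasDerivAt (fun y => KN.R1 C a u t y) (KN.R2 C a u t x) x := by
  have s1 := KN.contDiff_pdx hu
  have s2 := KN.contDiff_pdx s1
  have s3 := KN.contDiff_pdx s2
  have s4 := KN.contDiff_pdx s3
  have D0 := KN.hasDerivAt_pdx hu t x
  have D1 := KN.hasDerivAt_pdx s1 t x
  have D2 := KN.hasDerivAt_pdx s2 t x
  have D3 := KN.hasDerivAt_pdx s3 t x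
  have D4 := KN.hasDerivAt_pdx s4 t x
  have hx1 := hux t x
  have hx2 : (pdx u t x)^2 ≠ 0 := pow_ne_zero 2 hx1
  have hE : HasDerivAt (fun y => C * Real.exp (4 * a * u t y))
      (C * (Real.exp (4 * a * u t x) * (4 * a * pdx u t x))) x :=
    (D0.const_mul (4 * a)).exp.const_mul C
  have h1 := D4.sub (((D2.mul D3).const_mul 3).div D1 hx1)
  have h2 := h1.add (((D2.fun_pow 3).const_mul (3/2)).div (D1.fun_pow 2) hx2)
  have h3 := h2.add (hE.const_mul (4 * a))
  have h := h3.sub ((hE.mul D2).div (D1.fun_pow 2) hx2)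
  have hfeq : (fun y => KN.R1 C a u t y)
      = fun y => pdx (pdx (pdx (pdx u))) t y - 3 * (pdx (pdx u) t y * pdx (pdx (pdx u)) t y) / pdx u t y
        + 3/2 * (pdx (pdx u) t y)^3 / (pdx u t y)^2
        + 4 * a * (C * Real.exp (4 * a * u t y))
        - C * Real.exp (4 * a * u t y) * pdx (pdx u) t y / (pdx u t y)^2 := by
    funext y; simp only [KN.R1]; ring
  rw [hfeq]
  exact h.congr_deriv (by simp only [KN.R2, Pi.mul_apply]; field_simp; ring)

private lemma KN.hasDerivAt_R2 (hu : ContDiff ℝ (⊤ : ℕ∞) (Function.uncurry u))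
    (hux : ∀ t x, pdx u t x ≠ 0) (t x : ℝ) :
    HasDerivAt (fun y => KN.R2 C a u t y) (KN.R3 C a u t x) x := by
  have s1 := KN.contDiff_pdx hu
  have s2 := KN.contDiff_pdx s1
  have s3 := KN.contDiff_pdx s2
  have s4 := KN.contDiff_pdx s3
  have s5 := KN.contDiff_pdx s4
  have D0 := KN.hasDerivAt_pdx hu t x
  have D1 := KN.hasDerivAt_pdx s1 t x
  have D2 := KN.hasDerivAt_pdx s2 t x
  have D3 := KN.hasDerivAt_pdx s3 t x
  have D4 := KN.hasDerivAt_pdx s4 t x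
  have D5 := KN.hasDerivAt_pdx s5 t x
  have hx1 := hux t x
  have hx2 : (pdx u t x)^2 ≠ 0 := pow_ne_zero 2 hx1
  have hx3 : (pdx u t x)^3 ≠ 0 := pow_ne_zero 3 hx1
  have hE : HasDerivAt (fun y => C * Real.exp (4 * a * u t y))
      (C * (Real.exp (4 * a * u t x) * (4 * a * pdx u t x))) x :=
    (D0.const_mul (4 * a)).exp.const_mul C
  have h1 := D5.sub (((D3.fun_pow 2).const_mul 3).div D1 hx1)
  have h2 := h1.sub (((D2.mul D4).const_mul 3).div D1 hx1)
  have h3 := h2.add ((((D2.fun_pow 2).mul D3).const_mul (15/2)).div (D1.fun_pow 2) hx2)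
  have h4 := h3.sub (((D2.fun_pow 4).const_mul 3).div (D1.fun_pow 3) hx3)
  have h5 := h4.add ((hE.mul D1).const_mul (16 * a^2))
  have h6 := h5.sub ((((hE.mul D2).const_mul (4 * a))).div D1 hx1)
  have h7 := h6.sub ((hE.mul D3).div (D1.fun_pow 2) hx2)
  have h := h7.add (((hE.mul (D2.fun_pow 2)).const_mul 2).div (D1.fun_pow 3) hx3)
  have hfeq : (fun y => KN.R2 C a u t y)
      = fun y => pdx (pdx (pdx (pdx (pdx u)))) t y
        - 3 * (pdx (pdx (pdx u)) t y)^2 / pdx u t y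
        - 3 * (pdx (pdx u) t y * pdx (pdx (pdx (pdx u))) t y) / pdx u t y
        + 15/2 * ((pdx (pdx u) t y)^2 * pdx (pdx (pdx u)) t y) / (pdx u t y)^2
        - 3 * (pdx (pdx u) t y)^4 / (pdx u t y)^3
        + 16 * a^2 * (C * Real.exp (4 * a * u t y) * pdx u t y)
        - 4 * a * (C * Real.exp (4 * a * u t y) * pdx (pdx u) t y) / pdx u t y
        - C * Real.exp (4 * a * u t y) * pdx (pdx (pdx u)) t y / (pdx u t y)^2
        + 2 * (C * Real.exp (4 * a * u t y) * (pdx (pdx u) t y)^2) / (pdx u t y)^3 := by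
    funext y; simp only [KN.R2]; ring
  rw [hfeq]
  exact h.congr_deriv (by simp only [KN.R3, Pi.mul_apply]; field_simp; ring)

end KNderiv

set_option maxHeartbeats 2000000

/-- Point symmetry `X₃ₐ = -3at ∂_t - ax ∂_x + ∂_u` of the gKN equation with
`f(u) = C exp(4au)`: its characteristic `P = 1 + 3at u_t + ax u_x` satisfies the
symmetry determining equation. -/
theorem gKN_point_symmetry_X3a (C a : ℝ) (hC : C ≠ 0) (ha : a ≠ 0)
    (u : ℝ → ℝ → ℝ) (hu : ContDiff ℝ (⊤ : ℕ∞) (Function.uncurry u))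
    (hux : ∀ t x, pdx u t x ≠ 0)
    (hsol : isGKN (fun v => C * Real.exp (4 * a * v)) u) :
    symmDet (fun v => C * Real.exp (4 * a * v)) u
      (fun t x => 1 + 3 * a * t * pdt u t x + a * x * pdx u t x) := by
  have s1 := KN.contDiff_pdx hu
  have s2 := KN.contDiff_pdx s1
  have s3 := KN.contDiff_pdx s2
  have hW : pdt u = KN.R C a u := funext fun t => funext fun x => hsol t x
  have hR1fun : pdx (KN.R C a u) = KN.R1 C a u :=
    funext fun t => funext fun x => (KN.hasDerivAt_R hu hux t x).deriv
  have hR2fun : pdx (KN.R1 C a u) = KN.R2 C a u :=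
    funext fun t => funext fun x => (KN.hasDerivAt_R1 hu hux t x).deriv
  have hR3fun : pdx (KN.R2 C a u) = KN.R3 C a u :=
    funext fun t => funext fun x => (KN.hasDerivAt_R2 hu hux t x).deriv
  have hc1 : pdt (pdx u) = KN.R1 C a u := by
    have h : pdt (pdx u) = pdx (pdt u) := funext fun t => funext fun x => KN.comm hu t x
    rw [h, hW, hR1fun]
  have hc2 : pdt (pdx (pdx u)) = KN.R2 C a u := by
    have h : pdt (pdx (pdx u)) = pdx (pdt (pdx u)) := funext fun t => funext fun x => KN.comm s1 t x
    rw [h, hc1, hR2fun]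
  have hc3 : pdt (pdx (pdx (pdx u))) = KN.R3 C a u := by
    have h : pdt (pdx (pdx (pdx u))) = pdx (pdt (pdx (pdx u))) :=
      funext fun t => funext fun x => KN.comm s2 t x
    rw [h, hc2, hR3fun]
  have hP1 : pdx (fun t x => 1 + 3 * a * t * pdt u t x + a * x * pdx u t x)
      = fun t x => 3 * a * t * KN.R1 C a u t x + a * pdx u t x + a * x * pdx (pdx u) t x := by
    funext t x
    show deriv (fun y => 1 + 3 * a * t * pdt u t y + a * y * pdx u t y) x
      = 3 * a * t * KN.R1 C a u t x + a * pdx u t x + a * x * pdx (pdx u) t x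
    rw [hW]
    have D1 := KN.hasDerivAt_pdx s1 t x
    have hay : HasDerivAt (fun y => a * y) a x := by simpa using (hasDerivAt_id x).const_mul a
    have h := ((hasDerivAt_const x (1:ℝ)).add
      ((KN.hasDerivAt_R (C:=C) (a:=a) hu hux t x).const_mul (3 * a * t))).add (hay.mul D1)
    exact (h.congr_deriv (by ring)).deriv
  have hP2 : pdx (fun t x => 3 * a * t * KN.R1 C a u t x + a * pdx u t x + a * x * pdx (pdx u) t x)
      = fun t x => 3 * a * t * KN.R2 C a u t x + 2 * a * pdx (pdx u) t x
          + a * x * pdx (pdx (pdx u)) t x := by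
    funext t x
    show deriv (fun y => 3 * a * t * KN.R1 C a u t y + a * pdx u t y + a * y * pdx (pdx u) t y) x
      = 3 * a * t * KN.R2 C a u t x + 2 * a * pdx (pdx u) t x + a * x * pdx (pdx (pdx u)) t x
    have D1 := KN.hasDerivAt_pdx s1 t x
    have D2 := KN.hasDerivAt_pdx s2 t x
    have hay : HasDerivAt (fun y => a * y) a x := by simpa using (hasDerivAt_id x).const_mul a
    have h := (((KN.hasDerivAt_R1 (C:=C) (a:=a) hu hux t x).const_mul (3 * a * t)).add
      (D1.const_mul a)).add (hay.mul D2)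
    exact (h.congr_deriv (by ring)).deriv
  intro t x
  have hx1 := hux t x
  have hP3 : pdx (fun t x => 3 * a * t * KN.R2 C a u t x + 2 * a * pdx (pdx u) t x
        + a * x * pdx (pdx (pdx u)) t x) t x
      = 3 * a * t * KN.R3 C a u t x + 3 * a * pdx (pdx (pdx u)) t x
        + a * x * pdx (pdx (pdx (pdx u))) t x := by
    show deriv (fun y => 3 * a * t * KN.R2 C a u t y + 2 * a * pdx (pdx u) t y
        + a * y * pdx (pdx (pdx u)) t y) x = _
    have D2 := KN.hasDerivAt_pdx s2 t x
    have D3 := KN.hasDerivAt_pdx s3 t x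
    have hay : HasDerivAt (fun y => a * y) a x := by simpa using (hasDerivAt_id x).const_mul a
    have h := (((KN.hasDerivAt_R2 (C:=C) (a:=a) hu hux t x).const_mul (3 * a * t)).add
      (D2.const_mul (2 * a))).add (hay.mul D3)
    exact (h.congr_deriv (by ring)).deriv
  have hPt : pdt (fun t x => 1 + 3 * a * t * pdt u t x + a * x * pdx u t x) t x
      = 3 * a * KN.R C a u t x
        + 3 * a * t * (KN.R3 C a u t x
          - (3/2) * (2 * pdx (pdx u) t x * KN.R2 C a u t x * pdx u t x
              - (pdx (pdx u) t x)^2 * KN.R1 C a u t x) / (pdx u t x)^2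
          + (4 * a * (C * Real.exp (4 * a * u t x)) * KN.R C a u t x * pdx u t x
              - C * Real.exp (4 * a * u t x) * KN.R1 C a u t x) / (pdx u t x)^2)
        + a * x * KN.R1 C a u t x := by
    show deriv (fun s => 1 + 3 * a * s * pdt u s x + a * x * pdx u s x) t = _
    rw [hW]
    have t0 : HasDerivAt (fun s => u s x) (KN.R C a u t x) t := by
      have h := KN.hasDerivAt_pdt hu t x; rwa [hW] at h
    have t1 : HasDerivAt (fun s => pdx u s x) (KN.R1 C a u t x) t := by
      have h := KN.hasDerivAt_pdt s1 t x; rwa [hc1] at h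
    have t2 : HasDerivAt (fun s => pdx (pdx u) s x) (KN.R2 C a u t x) t := by
      have h := KN.hasDerivAt_pdt s2 t x; rwa [hc2] at h
    have t3 : HasDerivAt (fun s => pdx (pdx (pdx u)) s x) (KN.R3 C a u t x) t := by
      have h := KN.hasDerivAt_pdt s3 t x; rwa [hc3] at h
    have hEt : HasDerivAt (fun s => C * Real.exp (4 * a * u s x))
        (C * (Real.exp (4 * a * u t x) * (4 * a * KN.R C a u t x))) t :=
      (t0.const_mul (4 * a)).exp.const_mul C
    have hRt : HasDerivAt (fun s => KN.R C a u s x)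
        (KN.R3 C a u t x
          - (3/2) * (2 * pdx (pdx u) t x * KN.R2 C a u t x * pdx u t x
              - (pdx (pdx u) t x)^2 * KN.R1 C a u t x) / (pdx u t x)^2
          + (4 * a * (C * Real.exp (4 * a * u t x)) * KN.R C a u t x * pdx u t x
              - C * Real.exp (4 * a * u t x) * KN.R1 C a u t x) / (pdx u t x)^2) t := by
      have h := (t3.sub (((t2.fun_pow 2).const_mul (3/2)).div t1 hx1)).add (hEt.div t1 hx1)
      exact h.congr_deriv (by field_simp; ring)
    have c1 : HasDerivAt (fun s => 3 * a * s) (3 * a) t := by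
      simpa using (hasDerivAt_id t).const_mul (3 * a)
    have h := ((hasDerivAt_const t (1:ℝ)).add (c1.mul hRt)).add (t1.const_mul (a * x))
    exact (h.congr_deriv (by ring)).deriv
  have hdf : deriv (fun v => C * Real.exp (4 * a * v)) (u t x)
      = C * (Real.exp (4 * a * u t x) * (4 * a * 1)) := by
    have h : HasDerivAt (fun v => C * Real.exp (4 * a * v))
        (C * (Real.exp (4 * a * u t x) * (4 * a * 1))) (u t x) :=
      ((hasDerivAt_id (u t x)).const_mul (4 * a)).exp.const_mul C
    exact h.deriv
  rw [hPt, hP1, hP2, hP3, hdf, hW]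
  simp only [KN.R, KN.R1, KN.R2, KN.R3]
  field_simp
  ring
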